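/- Let k ≥ 2 and N ≥ 2 be integers. If there exists a corner-free set A ⊆ {1, …, N}^k with |A| = r ≥ 1, then there exists a coloring of {1, …, N}^k with at most ⌈(2N+1)^k · k · log₂ N / r⌉ colors such that no nontrivial k-dimensional corner is monochromatic, i.e. there is no x ∈ {1, …, N}^k and integer δ ≠ 0 such that x and all points x + δ·e_j for j ∈ {1, …, k} lie in {1, …, N}^k and receive the same color (where e_j is the j-th standard basis vector). -/
import Mathlib

/-- `Q ⊆ ℤ^n` is corner-free: there do not exist `x ∈ Q` and `δ ≠ 0` with
`x + δ·e_j ∈ Q` for every `j`. -/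
def CornerFree {n : ℕ} (Q : Set (Fin n → ℤ)) : Prop :=
  ¬ ∃ (x : Fin n → ℤ) (δ : ℤ), δ ≠ 0 ∧ x ∈ Q ∧
    ∀ j : Fin n, Function.update x j (x j + δ) ∈ Q

namespace Stmt11Aux

variable {k N : ℕ}

noncomputable def grd (k N : ℕ) : Finset (Fin k → ℤ) :=
  Fintype.piFinset fun _ => Finset.Icc (1 : ℤ) (N : ℤ)

noncomputable def tst (k N : ℕ) : Finset (Fin k → ℤ) :=
  Fintype.piFinset fun _ => Finset.Icc (1 - (N : ℤ)) ((N : ℤ) - 1)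

lemma grd_card : (grd k N).card = N ^ k := by
  simp [grd, Fintype.card_piFinset, Int.card_Icc]

lemma tst_card (hN : 1 ≤ N) : (tst k N).card = (2 * N - 1) ^ k := by
  have h : ((N : ℤ) - (1 - N)).toNat = 2 * N - 1 := by omega
  simp [tst, Fintype.card_piFinset, Int.card_Icc, h]

lemma tst_nonempty (hN : 1 ≤ N) : (tst k N).Nonempty := by
  refine ⟨fun _ => 0, ?_⟩
  simp only [tst, Fintype.mem_piFinset, Finset.mem_Icc]
  intro i; constructor <;> [linarith [(by exact_mod_cast hN : (1:ℤ) ≤ N)];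
    linarith [(by exact_mod_cast hN : (1:ℤ) ≤ N)]]

/-- averaging step: some translate of `A` covers at least the average number of
points of `U`. -/
lemma avg_step (hN : 1 ≤ N) (A U : Finset (Fin k → ℤ))
    (hA : A ⊆ grd k N) (hU : U ⊆ grd k N) :
    ∃ t : Fin k → ℤ, (U.card * A.card : ℝ) ≤
      ((tst k N).card : ℝ) * ((A.image (· + t)) ∩ U).card := by
  classical
  have key : ∑ t ∈ tst k N, ((A.image (· + t)) ∩ U).card = U.card * A.card := by
    have h1 : ∀ t : Fin k → ℤ, (A.image (· + t)) ∩ U = U.filter (fun u => u - t ∈ A) := by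
      intro t
      ext u
      simp only [Finset.mem_inter, Finset.mem_image, Finset.mem_filter]
      constructor
      · rintro ⟨⟨a, ha, rfl⟩, hu⟩
        exact ⟨hu, by simpa using ha⟩
      · rintro ⟨hu, ha⟩
        exact ⟨⟨u - t, ha, by abel⟩, hu⟩
    have h2 : ∀ u ∈ U, (tst k N).filter (fun t => u - t ∈ A) = A.image (fun a => u - a) := by
      intro u hu
      ext t
      simp only [Finset.mem_filter, Finset.mem_image]
      constructor
      · rintro ⟨ht, ha⟩
        exact ⟨u - t, ha, by abel⟩
      · rintro ⟨a, ha, rfl⟩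
        refine ⟨?_, by simpa using ha⟩
        have hu' := hU hu
        have ha' := hA ha
        simp only [grd, Fintype.mem_piFinset, Finset.mem_Icc] at hu' ha'
        simp only [tst, Fintype.mem_piFinset, Finset.mem_Icc, Pi.sub_apply]
        intro i
        have h1 := hu' i; have h2 := ha' i
        omega
    calc ∑ t ∈ tst k N, ((A.image (· + t)) ∩ U).card
        = ∑ t ∈ tst k N, ∑ u ∈ U, if u - t ∈ A then 1 else 0 := by
          refine Finset.sum_congr rfl fun t _ => ?_
          rw [h1 t, Finset.card_filter]
      _ = ∑ u ∈ U, ∑ t ∈ tst k N, if u - t ∈ A then 1 else 0 := Finset.sum_comm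
      _ = ∑ u ∈ U, ((tst k N).filter (fun t => u - t ∈ A)).card := by
          refine Finset.sum_congr rfl fun u _ => ?_
          rw [Finset.card_filter]
      _ = ∑ u ∈ U, A.card := by
          refine Finset.sum_congr rfl fun u hu => ?_
          rw [h2 u hu, Finset.card_image_of_injective _
            (fun a b h => by simpa using congrArg (fun z => u - z) h)]
      _ = U.card * A.card := by rw [Finset.sum_const, smul_eq_mul]
  by_contra hcon
  push_neg at hcon
  have hsum : ∑ t ∈ tst k N, (((tst k N).card : ℝ) * ((A.image (· + t)) ∩ U).card)
      < ∑ _t ∈ tst k N, (U.card * A.card : ℝ) :=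
    Finset.sum_lt_sum_of_nonempty (tst_nonempty hN) (fun t _ => hcon t)
  rw [← Finset.mul_sum, Finset.sum_const, nsmul_eq_mul] at hsum
  have : (∑ t ∈ tst k N, (((A.image (· + t)) ∩ U).card : ℝ)) = (U.card * A.card : ℝ) := by
    exact_mod_cast congrArg (Nat.cast : ℕ → ℝ) key
  rw [this] at hsum
  exact lt_irrefl _ hsum

lemma greedy_cover (hN : 1 ≤ N) (A : Finset (Fin k → ℤ)) (hA : A ⊆ grd k N) :
    ∀ (m : ℕ) (U : Finset (Fin k → ℤ)), U ⊆ grd k N →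
      ∃ f : ℕ → (Fin k → ℤ),
        (((U \ (Finset.range m).biUnion (fun i => A.image (· + f i))).card : ℝ)) ≤
          U.card * ((((tst k N).card : ℝ) - A.card) / ((tst k N).card : ℝ)) ^ m := by
  classical
  intro m
  induction m with
  | zero =>
    intro U hU
    exact ⟨fun _ => 0, by simp⟩
  | succ m ih =>
    intro U hU
    obtain ⟨t, ht⟩ := avg_step hN A U hA hU
    set U' := U \ A.image (· + t) with hU'def
    obtain ⟨f', hf'⟩ := ih U' (fun x hx => hU (Finset.mem_sdiff.mp hx).1)
    refine ⟨fun i => if i = 0 then t else f' (i - 1), ?_⟩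
    have hTc0 : (0 : ℝ) < ((tst k N).card : ℝ) := by
      exact_mod_cast Finset.card_pos.mpr (tst_nonempty hN)
    have hrT : (A.card : ℝ) ≤ ((tst k N).card : ℝ) := by
      have h1 : A.card ≤ (grd k N).card := Finset.card_le_card hA
      have h2 : (grd k N).card ≤ (tst k N).card := by
        rw [grd_card, tst_card hN]
        exact Nat.pow_le_pow_left (by omega) k
      exact_mod_cast le_trans h1 h2
    have hq0 : (0 : ℝ) ≤ (((tst k N).card : ℝ) - A.card) / ((tst k N).card : ℝ) :=
      div_nonneg (by linarith) (le_of_lt hTc0)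
    -- the new uncovered set is contained in the old uncovered set of U'
    have hsub : U \ (Finset.range (m + 1)).biUnion
          (fun i => A.image (· + (if i = 0 then t else f' (i - 1)))) ⊆
        U' \ (Finset.range m).biUnion (fun i => A.image (· + f' i)) := by
      intro x hx
      rw [Finset.mem_sdiff] at hx
      obtain ⟨hxU, hxn⟩ := hx
      rw [Finset.mem_sdiff]
      constructor
      · rw [hU'def, Finset.mem_sdiff]
        refine ⟨hxU, fun hc => hxn ?_⟩
        exact Finset.mem_biUnion.mpr ⟨0, Finset.mem_range.mpr (Nat.succ_pos m), by simpa using hc⟩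
      · intro hc
        obtain ⟨i, hi, hxi⟩ := Finset.mem_biUnion.mp hc
        refine hxn (Finset.mem_biUnion.mpr ⟨i + 1, ?_, ?_⟩)
        · have := Finset.mem_range.mp hi
          exact Finset.mem_range.mpr (by omega)
        · simpa using hxi
    have hcard1 : ((U' \ (Finset.range m).biUnion (fun i => A.image (· + f' i))).card : ℝ) ≤
        U'.card * ((((tst k N).card : ℝ) - A.card) / ((tst k N).card : ℝ)) ^ m := hf'
    have hU'card : (U'.card : ℝ) ≤
        U.card * ((((tst k N).card : ℝ) - A.card) / ((tst k N).card : ℝ)) := by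
      have h1 : (U \ A.image (· + t)).card + (U ∩ A.image (· + t)).card = U.card :=
        Finset.card_sdiff_add_card_inter U _
      have h2 : (U ∩ A.image (· + t)).card = ((A.image (· + t)) ∩ U).card := by
        rw [Finset.inter_comm]
      have h3 : (U'.card : ℝ) = U.card - ((A.image (· + t)) ∩ U).card := by
        rw [hU'def]
        rw [← h1, h2]
        push_cast
        ring
      rw [h3, ← mul_div_assoc, le_div_iff₀ hTc0]
      nlinarith [ht]
    calc ((U \ (Finset.range (m + 1)).biUnion
          (fun i => A.image (· + (if i = 0 then t else f' (i - 1))))).card : ℝ)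
        ≤ ((U' \ (Finset.range m).biUnion (fun i => A.image (· + f' i))).card : ℝ) := by
          exact_mod_cast Finset.card_le_card hsub
      _ ≤ U'.card * ((((tst k N).card : ℝ) - A.card) / ((tst k N).card : ℝ)) ^ m := hcard1
      _ ≤ (U.card * ((((tst k N).card : ℝ) - A.card) / ((tst k N).card : ℝ))) *
            ((((tst k N).card : ℝ) - A.card) / ((tst k N).card : ℝ)) ^ m := by
          exact mul_le_mul_of_nonneg_right hU'card (pow_nonneg hq0 m)
      _ = U.card * ((((tst k N).card : ℝ) - A.card) / ((tst k N).card : ℝ)) ^ (m + 1) := by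
          ring

end Stmt11Aux

theorem stmt11 (k N r : ℕ) (hk : 2 ≤ k) (hN : 2 ≤ N) (hr : 1 ≤ r)
    (A : Finset (Fin k → ℤ))
    (hA : A ⊆ Fintype.piFinset (fun _ => Finset.Icc (1 : ℤ) (N : ℤ)))
    (hcard : A.card = r) (hCF : CornerFree (↑A : Set (Fin k → ℤ))) :
    ∃ χ : (Fin k → ℤ) → ℕ,
      (∀ x : Fin k → ℤ, (∀ j, x j ∈ Finset.Icc (1 : ℤ) (N : ℤ)) →
        (χ x : ℤ) < ⌈((2 * (N : ℝ) + 1) ^ k * k * Real.logb 2 N) / (r : ℝ)⌉) ∧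
      ¬ ∃ (x : Fin k → ℤ) (δ : ℤ), δ ≠ 0 ∧
        (∀ j, x j ∈ Finset.Icc (1 : ℤ) (N : ℤ)) ∧
        (∀ j j', Function.update x j (x j + δ) j' ∈ Finset.Icc (1 : ℤ) (N : ℤ)) ∧
        (∀ j, χ (Function.update x j (x j + δ)) = χ x) := by
  classical
  open Stmt11Aux in
  have hN1 : 1 ≤ N := by omega
  have hAg : A ⊆ grd k N := hA
  have hN1R : (1 : ℝ) < N := by exact_mod_cast hN
  have hN0R : (0 : ℝ) < N := by linarith
  have hlogN : 0 < Real.log N := Real.log_pos hN1R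
  have hlogb : Real.log N ≤ Real.logb 2 N := by
    rw [Real.logb, le_div_iff₀ (by positivity)]
    nlinarith [Real.log_two_lt_d9]
  have hr0R : (0 : ℝ) < r := by exact_mod_cast hr
  have hk0R : (0 : ℝ) < k := by exact_mod_cast (by omega : 0 < k)
  set B : ℝ := ((2 * (N : ℝ) + 1) ^ k * k * Real.logb 2 N) / (r : ℝ) with hB
  have hBpos : 0 < B := by
    apply div_pos _ hr0R
    have : (0:ℝ) < Real.logb 2 N := Real.logb_pos (by norm_num) hN1R
    positivity
  set m : ℕ := (⌈B⌉).toNat with hm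
  have hmceil : (m : ℤ) = ⌈B⌉ := Int.toNat_of_nonneg (le_of_lt (Int.ceil_pos.mpr hBpos))
  have hmB : B ≤ (m : ℝ) := by
    have : ((m : ℤ) : ℝ) = ((⌈B⌉ : ℤ) : ℝ) := by exact_mod_cast hmceil
    push_cast at this
    rw [this]
    exact Int.le_ceil B
  -- the key quantities
  set Tc : ℝ := ((tst k N).card : ℝ) with hTcdef
  have hTceq : Tc = (2 * (N : ℝ) - 1) ^ k := by
    rw [hTcdef, tst_card hN1]
    push_cast [Nat.cast_sub (by omega : 1 ≤ 2 * N)]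
    ring_nf
  have hTc0 : 0 < Tc := by rw [hTceq]; apply pow_pos; linarith
  have hTclt : Tc < (2 * (N : ℝ) + 1) ^ k := by
    rw [hTceq]
    exact pow_lt_pow_left₀ (by linarith) (by linarith) (by omega)
  have hrT : (r : ℝ) ≤ Tc := by
    rw [hTceq, ← hcard]
    have h1 : A.card ≤ (grd k N).card := Finset.card_le_card hAg
    rw [grd_card] at h1
    calc (A.card : ℝ) ≤ ((N : ℝ)) ^ k := by exact_mod_cast h1.trans (le_refl _)
      _ ≤ (2 * (N : ℝ) - 1) ^ k := pow_le_pow_left₀ (by linarith) (by linarith) k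
  set q : ℝ := (Tc - r) / Tc with hq
  have hq0 : 0 ≤ q := div_nonneg (by linarith) (le_of_lt hTc0)
  -- the exponential estimate
  have hmain : ((N : ℝ)) ^ k * q ^ m < 1 := by
    have hqe : q ≤ Real.exp (-((r : ℝ) / Tc)) := by
      have h1 := Real.add_one_le_exp (-((r : ℝ) / Tc))
      have h2 : q = 1 - (r : ℝ) / Tc := by
        rw [hq]; field_simp
      linarith
    have hqm : q ^ m ≤ Real.exp ((m : ℝ) * -((r : ℝ) / Tc)) := by
      rw [Real.exp_nat_mul]
      exact pow_le_pow_left₀ hq0 hqe m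
    have hNk : ((N : ℝ)) ^ k = Real.exp ((k : ℝ) * Real.log N) := by
      rw [Real.exp_nat_mul, Real.exp_log hN0R]
    have hexplt : Real.exp ((k : ℝ) * Real.log N + (m : ℝ) * -((r : ℝ) / Tc)) < 1 := by
      apply Real.exp_lt_one_iff.mpr
      have hkey : (k : ℝ) * Real.log N * Tc < (m : ℝ) * r := by
        have h1 : (2 * (N : ℝ) + 1) ^ k * k * Real.logb 2 N ≤ (m : ℝ) * r := by
          have := mul_le_mul_of_nonneg_right hmB (le_of_lt hr0R)
          rwa [hB, div_mul_cancel₀ _ (ne_of_gt hr0R)] at this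
        have h2 : (k : ℝ) * Real.log N * Tc < (2 * (N : ℝ) + 1) ^ k * k * Real.logb 2 N := by
          have hlogb0 : 0 < Real.logb 2 N := lt_of_lt_of_le hlogN hlogb
          calc (k : ℝ) * Real.log N * Tc ≤ (k : ℝ) * Real.logb 2 N * Tc := by
                apply mul_le_mul_of_nonneg_right _ (le_of_lt hTc0)
                exact mul_le_mul_of_nonneg_left hlogb (le_of_lt hk0R)
            _ < (k : ℝ) * Real.logb 2 N * (2 * (N : ℝ) + 1) ^ k := by
                exact mul_lt_mul_of_pos_left hTclt (by positivity)
            _ = (2 * (N : ℝ) + 1) ^ k * k * Real.logb 2 N := by ring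
        linarith
      have : (k : ℝ) * Real.log N < (m : ℝ) * ((r : ℝ) / Tc) := by
        rw [mul_div_assoc'] at *
        rw [lt_div_iff₀ hTc0]
        exact hkey
      linarith [this]
    calc ((N : ℝ)) ^ k * q ^ m
        ≤ ((N : ℝ)) ^ k * Real.exp ((m : ℝ) * -((r : ℝ) / Tc)) := by
          exact mul_le_mul_of_nonneg_left hqm (by positivity)
      _ = Real.exp ((k : ℝ) * Real.log N + (m : ℝ) * -((r : ℝ) / Tc)) := by
          rw [hNk, ← Real.exp_add]
      _ < 1 := hexplt
  -- apply the greedy covering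
  obtain ⟨f, hf⟩ := greedy_cover hN1 A hAg m (grd k N) (le_refl _)
  have hcovered : (grd k N) \ (Finset.range m).biUnion (fun i => A.image (· + f i)) = ∅ := by
    rw [← Finset.card_eq_zero]
    by_contra hne
    have h1 : 1 ≤ (((grd k N) \ (Finset.range m).biUnion
        (fun i => A.image (· + f i))).card : ℝ) := by
      exact_mod_cast Nat.one_le_iff_ne_zero.mpr hne
    rw [grd_card, hcard] at hf
    rw [← hTcdef, ← hq] at hf
    push_cast at hf
    linarith
  have hcov : ∀ x ∈ grd k N, ∃ i, i < m ∧ x ∈ A.image (· + f i) := by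
    intro x hx
    have := Finset.sdiff_eq_empty_iff_subset.mp hcovered hx
    obtain ⟨i, hi, hxi⟩ := Finset.mem_biUnion.mp this
    exact ⟨i, Finset.mem_range.mp hi, hxi⟩
  -- define the coloring
  refine ⟨fun x => if h : ∃ i, i < m ∧ x ∈ A.image (· + f i) then Nat.find h else 0, ?_, ?_⟩
  · intro x hx
    have hxg : x ∈ grd k N := Fintype.mem_piFinset.mpr hx
    have h := hcov x hxg
    simp only [dif_pos h]
    calc ((Nat.find h : ℤ)) < (m : ℤ) := by exact_mod_cast (Nat.find_spec h).1
      _ = ⌈B⌉ := hmceil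
  · rintro ⟨x, δ, hδ, hx, hxj, hχ⟩
    have hxg : x ∈ grd k N := Fintype.mem_piFinset.mpr hx
    have hyg : ∀ j, Function.update x j (x j + δ) ∈ grd k N :=
      fun j => Fintype.mem_piFinset.mpr (hxj j)
    have hxh := hcov x hxg
    set c : ℕ := Nat.find hxh with hc
    have hxc : x ∈ A.image (· + f c) := (Nat.find_spec hxh).2
    have hyc : ∀ j, Function.update x j (x j + δ) ∈ A.image (· + f c) := by
      intro j
      have hyh := hcov _ (hyg j)
      have h1 := hχ j
      simp only [dif_pos hyh, dif_pos hxh] at h1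
      have := (Nat.find_spec hyh).2
      rwa [h1] at this
    obtain ⟨a, ha, hax⟩ := Finset.mem_image.mp hxc
    have haeq : a = x - f c := by rw [← hax]; abel
    apply hCF
    refine ⟨x - f c, δ, hδ, by rw [← haeq]; exact ha, ?_⟩
    intro j
    obtain ⟨b, hb, hbx⟩ := Finset.mem_image.mp (hyc j)
    have hbeq : Function.update (x - f c) j ((x - f c) j + δ) = b := by
      funext j'
      by_cases hj : j' = j
      · subst hj
        have : b j' + f c j' = x j' + δ := by
          have := congrFun hbx j'
          simpa [Function.update_self] using this
        simp [Function.update_self, Pi.sub_apply]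
        omega
      · have : b j' + f c j' = x j' := by
          have := congrFun hbx j'
          simpa [Function.update_of_ne hj] using this
        simp [Function.update_of_ne hj, Pi.sub_apply]
        omega
    rw [hbeq]
    exact hb
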